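/- The language 0*L_{p/q} of base-p/q expansions of natural numbers is prefix-closed: if val(u·w) ∈ ℕ for words u, w over A_p, then val(u) ∈ ℕ. -/
import Mathlib


/-- Base-p/q evaluation of a word over the digit alphabet, given as a list of
digits with the least-significant digit first:
`pqVal p q [a0, a1, ..., ak] = Σ (a_i / q) * (p/q)^i`. -/
def pqVal (p q : ℕ) : List ℕ → ℚ
  | [] => 0
  | a :: u => (a : ℚ) / q + ((p : ℚ) / q) * pqVal p q u

/-- `N_{p/q}`: the set of values of words over `A_p = {0, ..., p-1}`. -/
def pqSet (p q : ℕ) : Set ℚ :=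
  {x | ∃ u : List ℕ, (∀ a ∈ u, a < p) ∧ pqVal p q u = x}


lemma pqVal_nonneg (p q : ℕ) : ∀ u : List ℕ, 0 ≤ pqVal p q u
  | [] => le_refl 0
  | a :: u => by
    have := pqVal_nonneg p q u
    have h1 : (0:ℚ) ≤ (a:ℚ)/q := by positivity
    have h2 : (0:ℚ) ≤ (p:ℚ)/q := by positivity
    simpa [pqVal] using add_nonneg h1 (mul_nonneg h2 this)

lemma pqVal_mul_pow (p q : ℕ) (hq : 0 < q) :
    ∀ u : List ℕ, ∃ m : ℕ, pqVal p q u * (q:ℚ) ^ u.length = (m:ℚ)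
  | [] => ⟨0, by simp [pqVal]⟩
  | a :: u => by
    obtain ⟨m, hm⟩ := pqVal_mul_pow p q hq u
    refine ⟨a * q ^ u.length + p * m, ?_⟩
    have hq0 : (q:ℚ) ≠ 0 := by exact_mod_cast hq.ne'
    have : pqVal p q (a :: u) * (q:ℚ) ^ (a :: u).length
        = (a:ℚ) * q ^ u.length + p * (pqVal p q u * q ^ u.length) := by
      simp only [pqVal, List.length_cons]
      field_simp
      ring
    rw [this, hm]; push_cast; ring

lemma pqVal_step (p q : ℕ) (hq : 1 < q) (hpq : q < p) (hcop : Nat.Coprime p q)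
    (a : ℕ) (l : List ℕ) (N : ℕ) (hN : pqVal p q (a :: l) = (N:ℚ)) :
    ∃ M : ℕ, pqVal p q l = (M:ℚ) := by
  have hq0 : (0:ℚ) < q := by exact_mod_cast (by omega : 0 < q)
  have hp0 : (0:ℚ) < p := by exact_mod_cast (by omega : 0 < p)
  set x := pqVal p q l with hx
  obtain ⟨m, hm⟩ := pqVal_mul_pow p q (by omega) l
  have hxnn : 0 ≤ x := pqVal_nonneg p q l
  -- p * x = q * N - a
  have key : (p:ℚ) * x = (q:ℚ) * N - a := by
    have : (a:ℚ)/q + (p:ℚ)/q * x = N := by simpa [pqVal] using hN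
    field_simp at this
    linarith
  have haqN : a ≤ q * N := by
    have : (a:ℚ) ≤ (q:ℚ) * N := by nlinarith
    exact_mod_cast this
  -- p * m = (q*N - a) * q^len
  have hcast : ((q * N - a : ℕ) : ℚ) = (q:ℚ) * N - a := by
    rw [Nat.cast_sub haqN]; push_cast; ring
  have hnat : p * m = (q * N - a) * q ^ l.length := by
    have hQ : (p:ℚ) * m = ((q * N - a : ℕ):ℚ) * (q:ℚ) ^ l.length := by
      rw [hcast]
      calc (p:ℚ) * m = ((p:ℚ) * x) * (q:ℚ) ^ l.length := by rw [← hm]; ring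
        _ = ((q:ℚ) * N - a) * (q:ℚ) ^ l.length := by rw [key]
    exact_mod_cast hQ
  have hdvd : q ^ l.length ∣ m := by
    have h1 : q ^ l.length ∣ p * m := ⟨q * N - a, by linarith [hnat]⟩
    exact (Nat.Coprime.pow_left l.length hcop.symm).dvd_of_dvd_mul_left h1
  obtain ⟨M, hM⟩ := hdvd
  refine ⟨M, ?_⟩
  have hqk : ((q:ℚ) ^ l.length) ≠ 0 := by positivity
  have : x * (q:ℚ) ^ l.length = (M:ℚ) * (q:ℚ) ^ l.length := by
    rw [hm, hM]; push_cast; ring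
  exact mul_right_cancel₀ hqk this

/-- prefix-closure of expansions of naturals: if val(u·w) ∈ ℕ
then val(u) ∈ ℕ.  In the least-significant-first encoding u·w is `w ++ u`. -/
theorem stmt_7 (p q : ℕ) (hq : 1 < q) (hpq : q < p) (hcop : Nat.Coprime p q)
    (u w : List ℕ) (hu : ∀ a ∈ u, a < p) (hw : ∀ a ∈ w, a < p)
    (h : ∃ N : ℕ, pqVal p q (w ++ u) = (N : ℚ)) :
    ∃ M : ℕ, pqVal p q u = (M : ℚ) := by
  induction w with
  | nil => simpa using h
  | cons a t ih =>
    obtain ⟨N, hN⟩ := h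
    exact ih (fun b hb => hw b (List.mem_cons_of_mem a hb))
      (pqVal_step p q hq hpq hcop a (t ++ u) N hN)
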